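/- Let (M, ω, η) be a locally conformally symplectic manifold: ω a non-degenerate 2-form, η a closed 1-form with dω = η ∧ ω. Then the bracket {f,g} := ω^{-1}(df − fη, dg − gη) on C^∞(M) is a Jacobi bracket, i.e. it is skew-symmetric, satisfies the Jacobi identity, and is a first-order differential operator (derivation-plus-multiplication) in each argument. -/
import Mathlib


/-- Algebraic formulation on `R = C^∞(M)`, with vector fields
`𝔛(M) = Derivation ℝ R R`.  A locally conformally symplectic structure is a
non-degenerate (hypotheses `hnd`, `hham`) skew `R`-bilinear 2-form `ω` and a
closed 1-form `η` (hypothesis `hηcl`, via the Cartan formula for `dη`) with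
`dω = η ∧ ω` (hypothesis `hdω`, via the Cartan formula for `dω`).  `ham f` is
the Hamiltonian-type vector field of `df − fη`, i.e. `ω(ham f, −) = df − fη`,
so that `{f,g} := ω^{-1}(df − fη, dg − gη) = ω(ham f, ham g)`.  Claim: `{−,−}`
is a Jacobi bracket: it is skew-symmetric, satisfies the Jacobi identity, and
is a first-order differential operator (derivation-plus-multiplication) in each
argument (by skew-symmetry it suffices to record it in the second argument). -/
theorem stmt14 (R : Type*) [CommRing R] [Algebra ℝ R]
    (ω : Derivation ℝ R R →ₗ[R] Derivation ℝ R R →ₗ[R] R)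
    (η : Derivation ℝ R R →ₗ[R] R)
    (hskew : ∀ X Y : Derivation ℝ R R, ω X Y = - ω Y X)
    (hηcl : ∀ X Y : Derivation ℝ R R, X (η Y) - Y (η X) - η ⁅X, Y⁆ = 0)
    (hdω : ∀ X Y Z : Derivation ℝ R R,
      X (ω Y Z) - Y (ω X Z) + Z (ω X Y)
          - ω ⁅X, Y⁆ Z + ω ⁅X, Z⁆ Y - ω ⁅Y, Z⁆ X
        = η X * ω Y Z - η Y * ω X Z + η Z * ω X Y)
    (hnd : ∀ X : Derivation ℝ R R, (∀ Y, ω X Y = 0) → X = 0)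
    (ham : R → Derivation ℝ R R)
    (hham : ∀ (f : R) (Y : Derivation ℝ R R), ω (ham f) Y = Y f - f * η Y) :
    (∀ f g : R, ω (ham f) (ham g) = - ω (ham g) (ham f)) ∧
      (∀ f g h : R,
        ω (ham (ω (ham f) (ham g))) (ham h)
            + ω (ham (ω (ham g) (ham h))) (ham f)
            + ω (ham (ω (ham h) (ham f))) (ham g) = 0) ∧
      (∀ f : R, ∃ (D : Derivation ℝ R R) (r : R),
        ∀ g : R, ω (ham f) (ham g) = D g + r * g) := by
  -- Key computation: `ω(⁅X_a, X_b⁆, X_c)` in terms of the bracket functions.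
  have key : ∀ a b c : R,
      ω ⁅ham a, ham b⁆ (ham c)
        = (ham a) (ω (ham b) (ham c)) - (ham b) (ω (ham a) (ham c))
          + η (ham b) * ω (ham a) (ham c) - η (ham a) * ω (ham b) (ham c) := by
    intro a b c
    have A1 : ω ⁅ham a, ham b⁆ (ham c) = - ω (ham c) ⁅ham a, ham b⁆ := hskew _ _
    have A2 : ω (ham c) ⁅ham a, ham b⁆
        = ⁅ham a, ham b⁆ c - c * η ⁅ham a, ham b⁆ := hham c _
    have A3 : ⁅ham a, ham b⁆ c = (ham a) ((ham b) c) - (ham b) ((ham a) c) :=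
      Derivation.commutator_apply c
    have A4 : η ⁅ham a, ham b⁆ = (ham a) (η (ham b)) - (ham b) (η (ham a)) := by
      linear_combination -(hηcl (ham a) (ham b))
    have A10 : (ham b) c = ω (ham c) (ham b) + c * η (ham b) := by
      linear_combination -(hham c (ham b))
    have A9 : (ham a) c = ω (ham c) (ham a) + c * η (ham a) := by
      linear_combination -(hham c (ham a))
    have A5 : (ham a) ((ham b) c)
        = (ham a) (ω (ham c) (ham b))
          + (c * (ham a) (η (ham b)) + η (ham b) * (ham a) c) := by
      rw [A10, map_add, Derivation.leibniz, smul_eq_mul, smul_eq_mul]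
    have A6 : (ham b) ((ham a) c)
        = (ham b) (ω (ham c) (ham a))
          + (c * (ham b) (η (ham a)) + η (ham a) * (ham b) c) := by
      rw [A9, map_add, Derivation.leibniz, smul_eq_mul, smul_eq_mul]
    have A7 : (ham a) (ω (ham c) (ham b)) = - (ham a) (ω (ham b) (ham c)) := by
      rw [hskew (ham c) (ham b), map_neg]
    have A8 : (ham b) (ω (ham c) (ham a)) = - (ham b) (ω (ham a) (ham c)) := by
      rw [hskew (ham c) (ham a), map_neg]
    have A11 : ω (ham c) (ham a) = - ω (ham a) (ham c) := hskew _ _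
    have A12 : ω (ham c) (ham b) = - ω (ham b) (ham c) := hskew _ _
    rw [A1, A2, A3, A4, A5, A6, A9, A10, A7, A8, A11, A12]
    ring
  refine ⟨fun f g => hskew _ _, ?_, ?_⟩
  · intro f g h
    have g1 : ω (ham (ω (ham f) (ham g))) (ham h)
        = (ham h) (ω (ham f) (ham g)) - ω (ham f) (ham g) * η (ham h) := hham _ _
    have g2 : ω (ham (ω (ham g) (ham h))) (ham f)
        = (ham f) (ω (ham g) (ham h)) - ω (ham g) (ham h) * η (ham f) := hham _ _
    have g3 : ω (ham (ω (ham h) (ham f))) (ham g)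
        = (ham g) (ω (ham h) (ham f)) - ω (ham h) (ham f) * η (ham g) := hham _ _
    have A8 : (ham g) (ω (ham h) (ham f)) = - (ham g) (ω (ham f) (ham h)) := by
      rw [hskew (ham h) (ham f), map_neg]
    have A11 : ω (ham h) (ham f) = - ω (ham f) (ham h) := hskew _ _
    have k1 := key f g h
    have hd := hdω (ham f) (ham g) (ham h)
    have s5 : ω ⁅ham f, ham h⁆ (ham g)
        = - (ham f) (ω (ham g) (ham h)) - (ham h) (ω (ham f) (ham g))
          + η (ham h) * ω (ham f) (ham g) + η (ham f) * ω (ham g) (ham h) := by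
      have k2 := key f h g
      have t1 : ω (ham h) (ham g) = - ω (ham g) (ham h) := hskew _ _
      have t2 : (ham f) (ω (ham h) (ham g)) = - (ham f) (ω (ham g) (ham h)) := by
        rw [hskew (ham h) (ham g), map_neg]
      rw [k2, t2, t1]; ring
    have s6 : ω ⁅ham g, ham h⁆ (ham f)
        = - (ham g) (ω (ham f) (ham h)) + (ham h) (ω (ham f) (ham g))
          - η (ham h) * ω (ham f) (ham g) + η (ham g) * ω (ham f) (ham h) := by
      have k3 := key g h f
      have t1 : ω (ham h) (ham f) = - ω (ham f) (ham h) := hskew _ _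
      have t2 : (ham g) (ω (ham h) (ham f)) = - (ham g) (ω (ham f) (ham h)) := by
        rw [hskew (ham h) (ham f), map_neg]
      have t3 : ω (ham g) (ham f) = - ω (ham f) (ham g) := hskew _ _
      have t4 : (ham h) (ω (ham g) (ham f)) = - (ham h) (ω (ham f) (ham g)) := by
        rw [hskew (ham g) (ham f), map_neg]
      rw [k3, t2, t4, t1, t3]; ring
    linear_combination g1 + g2 + g3 + A8 - η (ham g) * A11 - hd - k1 + s5 - s6
  · intro f
    refine ⟨-ham f, η (ham f), fun g => ?_⟩
    rw [hskew, hham]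
    simp only [Derivation.neg_apply]
    ring
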